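/- Let G be a metagroup with distinguished central subgroup F and associator map t₃, T a commutative ring, ι : F → Tˣ an injective group homomorphism, and A = T[G] the metagroup algebra, with [g] ∈ A denoting the image of g ∈ G. Let c : G → T be any function satisfying c(t*g) = c(g) for all t ∈ F and g ∈ G, define h : G → A by h(g) = c(g)•[g], and define the coboundary f : G×G → A by f(x,y) = [x]*h(y) − h(x*y) + h(x)*[y]. Then f satisfies the twisted 2-cocycle identity: for all x₁, x₂, x₃ ∈ G, ι(t₃(x₁,x₂,x₃))•([x₁]*f(x₂,x₃)) − f(x₁*x₂, x₃) + ι(t₃(x₁,x₂,x₃))•f(x₁, x₂*x₃) − f(x₁,x₂)*[x₃] = 0. -/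

import Mathlib

/-- A *metagroup*: a set `G` with a binary operation such that left and right
division are uniquely defined, a two-sided neutral element `1` exists, and a
distinguished subset `F` is fixed which is a subgroup of the center of `G`,
together with a map `t₃ : G × G × G → F` measuring nonassociativity:
`(a*b)*c = t₃ a b c * (a*(b*c))`. -/
class Metagroup (G : Type*) extends Mul G, One G where
  /-- For all `a b` there is a unique `x` with `a * x = b`. -/
  existsUnique_mul_left : ∀ a b : G, ∃! x : G, a * x = b
  /-- For all `a b` there is a unique `y` with `y * a = b`. -/
  existsUnique_mul_right : ∀ a b : G, ∃! y : G, y * a = b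
  one_mul : ∀ g : G, 1 * g = g
  mul_one : ∀ g : G, g * 1 = g
  /-- The distinguished subset `F`. -/
  F : Set G
  /-- `F` consists of commuting elements. -/
  F_comm : ∀ a ∈ F, ∀ b : G, a * b = b * a
  /-- `F` consists of left-associating elements. -/
  F_assoc_left : ∀ a ∈ F, ∀ b c : G, (a * b) * c = a * (b * c)
  /-- `F` consists of middle-associating elements. -/
  F_assoc_mid : ∀ a ∈ F, ∀ b c : G, (b * a) * c = b * (a * c)
  /-- `F` consists of right-associating elements. -/
  F_assoc_right : ∀ a ∈ F, ∀ b c : G, (b * c) * a = b * (c * a)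
  /-- `F` contains the neutral element. -/
  one_mem_F : (1 : G) ∈ F
  /-- `F` is closed under multiplication. -/
  mul_mem_F : ∀ a ∈ F, ∀ b ∈ F, a * b ∈ F
  /-- Every element of `F` has a two-sided inverse in `F`. -/
  inv_mem_F : ∀ a ∈ F, ∃ b ∈ F, a * b = 1 ∧ b * a = 1
  /-- The associator map, with values in `F`. -/
  t₃ : G → G → G → G
  t₃_mem_F : ∀ a b c : G, t₃ a b c ∈ F
  t₃_spec : ∀ a b c : G, (a * b) * c = t₃ a b c * (a * (b * c))


instance (priority := 100) Metagroup.toMulOneClass (G : Type*) [Metagroup G] :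
    MulOneClass G where
  one_mul := Metagroup.one_mul
  mul_one := Metagroup.mul_one

variable {G : Type*} [Metagroup G] (T : Type*) [CommRing T]
  (ι : {g : G // g ∈ Metagroup.F (G := G)} → Tˣ)

/-- The set of relators `(t*g) - ι(t)•g` in the free `T`-module on `G`
(realized as `MonoidAlgebra T G`, whose multiplication is the `T`-bilinear
extension of the multiplication of `G`). -/
noncomputable def relatorSet : Set (MonoidAlgebra T G) :=
  {z | ∃ t : {g : G // g ∈ Metagroup.F (G := G)}, ∃ g : G,
    z = MonoidAlgebra.single (t.1 * g) 1 - ((ι t : Tˣ) : T) • MonoidAlgebra.single g 1}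

/-- The metagroup algebra `A = T[G]`: the quotient of the free `T`-module on
`G`, equipped with the `T`-bilinear multiplication induced by the
multiplication of `G`, by the two-sided ideal generated by the elements
`(t*g) - ι(t)•g` for `t ∈ F` and `g ∈ G`. -/
noncomputable def MetagroupAlgebra :=
  (TwoSidedIdeal.span (relatorSet T ι)).ringCon.Quotient

noncomputable instance : NonUnitalNonAssocRing (MetagroupAlgebra T ι) :=
  inferInstanceAs
    (NonUnitalNonAssocRing ((TwoSidedIdeal.span (relatorSet T ι)).ringCon.Quotient))

noncomputable instance : Module T (MetagroupAlgebra T ι) where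
  __ := (inferInstance :
    DistribMulAction T ((TwoSidedIdeal.span (relatorSet T ι)).ringCon.Quotient))
  add_smul r s x := Quotient.inductionOn' x fun a =>
    congrArg (TwoSidedIdeal.span (relatorSet T ι)).ringCon.toQuotient (add_smul r s a)
  zero_smul x := Quotient.inductionOn' x fun a =>
    congrArg (TwoSidedIdeal.span (relatorSet T ι)).ringCon.toQuotient (zero_smul T a)

/-- `[g]`, the image in `T[G]` of the basis element `g ∈ G`. -/
noncomputable def MetagroupAlgebra.of (g : G) : MetagroupAlgebra T ι :=
  (TwoSidedIdeal.span (relatorSet T ι)).ringCon.toQuotient (MonoidAlgebra.single g 1)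

/-- The `1`-cochain `h : G → A`, `h(g) = c(g)•[g]`, associated with a function
`c : G → T`. -/
noncomputable def cochainH (c : G → T) (g : G) : MetagroupAlgebra T ι :=
  c g • MetagroupAlgebra.of T ι g

/-- The coboundary `f = δh : G × G → A`,
`f(x,y) = [x]*h(y) - h(x*y) + h(x)*[y]`. -/
noncomputable def coboundaryF (c : G → T) (x y : G) : MetagroupAlgebra T ι :=
  MetagroupAlgebra.of T ι x * cochainH T ι c y - cochainH T ι c (x * y)
    + cochainH T ι c x * MetagroupAlgebra.of T ι y


section Aux
variable {G : Type*} [Metagroup G] (T : Type*) [CommRing T]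
  (ι : {g : G // g ∈ Metagroup.F (G := G)} → Tˣ)

lemma MetagroupAlgebra.of_mul (x y : G) :
    MetagroupAlgebra.of T ι x * MetagroupAlgebra.of T ι y
      = MetagroupAlgebra.of T ι (x * y) := by
  show (TwoSidedIdeal.span (relatorSet T ι)).ringCon.toQuotient
      (MonoidAlgebra.single x 1 * MonoidAlgebra.single y 1) = _
  rw [MonoidAlgebra.single_mul_single, one_mul]
  rfl

lemma MetagroupAlgebra.smul_of (r : T) (g : G) :
    r • MetagroupAlgebra.of T ι g
      = (TwoSidedIdeal.span (relatorSet T ι)).ringCon.toQuotient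
          (r • MonoidAlgebra.single g 1) := rfl

lemma MetagroupAlgebra.of_F_mul (t : {g : G // g ∈ Metagroup.F (G := G)}) (g : G) :
    MetagroupAlgebra.of T ι (t.1 * g) = ((ι t : Tˣ) : T) • MetagroupAlgebra.of T ι g := by
  rw [MetagroupAlgebra.smul_of]
  refine (RingCon.eq _).mpr ?_
  rw [TwoSidedIdeal.rel_iff]
  exact TwoSidedIdeal.subset_span ⟨t, g, rfl⟩

noncomputable instance : IsScalarTower T (MetagroupAlgebra T ι) (MetagroupAlgebra T ι) :=
  inferInstanceAs (IsScalarTower T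
    ((TwoSidedIdeal.span (relatorSet T ι)).ringCon.Quotient)
    ((TwoSidedIdeal.span (relatorSet T ι)).ringCon.Quotient))

noncomputable instance : SMulCommClass T (MetagroupAlgebra T ι) (MetagroupAlgebra T ι) :=
  inferInstanceAs (SMulCommClass T
    ((TwoSidedIdeal.span (relatorSet T ι)).ringCon.Quotient)
    ((TwoSidedIdeal.span (relatorSet T ι)).ringCon.Quotient))

end Aux

/-- Let `G` be a metagroup, `T` a commutative ring,
`ι : F → Tˣ` an injective group homomorphism and `A = T[G]` the metagroup
algebra.  Let `c : G → T` satisfy `c(t*g) = c(g)` for all `t ∈ F`, `g ∈ G`,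
let `h(g) = c(g)•[g]` and let `f(x,y) = [x]*h(y) - h(x*y) + h(x)*[y]` be the
corresponding coboundary.  Then `f` satisfies the twisted `2`-cocycle
identity
`ι(t₃(x₁,x₂,x₃))•([x₁]*f(x₂,x₃)) - f(x₁*x₂,x₃) + ι(t₃(x₁,x₂,x₃))•f(x₁,x₂*x₃)
  - f(x₁,x₂)*[x₃] = 0`. -/
theorem metagroup_algebra_coboundary_is_twisted_two_cocycle
    (hι_inj : Function.Injective ι)
    (hι_mul : ∀ a b : {g : G // g ∈ Metagroup.F (G := G)},
      ι ⟨a.1 * b.1, Metagroup.mul_mem_F a.1 a.2 b.1 b.2⟩ = ι a * ι b)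
    (c : G → T) (hc : ∀ t ∈ Metagroup.F (G := G), ∀ g : G, c (t * g) = c g)
    (x₁ x₂ x₃ : G) :
    ((ι ⟨Metagroup.t₃ x₁ x₂ x₃, Metagroup.t₃_mem_F x₁ x₂ x₃⟩ : Tˣ) : T) •
        (MetagroupAlgebra.of T ι x₁ * coboundaryF T ι c x₂ x₃)
      - coboundaryF T ι c (x₁ * x₂) x₃
      + ((ι ⟨Metagroup.t₃ x₁ x₂ x₃, Metagroup.t₃_mem_F x₁ x₂ x₃⟩ : Tˣ) : T) •
          coboundaryF T ι c x₁ (x₂ * x₃)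
      - coboundaryF T ι c x₁ x₂ * MetagroupAlgebra.of T ι x₃ = 0 := by
  have key := Metagroup.t₃_spec x₁ x₂ x₃
  set τ : T := ((ι ⟨Metagroup.t₃ x₁ x₂ x₃, Metagroup.t₃_mem_F x₁ x₂ x₃⟩ : Tˣ) : T) with hτ
  have hof : MetagroupAlgebra.of T ι ((x₁ * x₂) * x₃)
      = τ • MetagroupAlgebra.of T ι (x₁ * (x₂ * x₃)) := by
    rw [key]
    exact MetagroupAlgebra.of_F_mul T ι ⟨_, Metagroup.t₃_mem_F x₁ x₂ x₃⟩ _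
  have hcc : c ((x₁ * x₂) * x₃) = c (x₁ * (x₂ * x₃)) := by
    rw [key]; exact hc _ (Metagroup.t₃_mem_F x₁ x₂ x₃) _
  simp only [coboundaryF, cochainH, smul_mul_assoc, mul_smul_comm,
    mul_sub, mul_add, sub_mul, add_mul,
    MetagroupAlgebra.of_mul, hof, hcc]
  module
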